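/- Let V be a ℤ/2-graded complex vector space equipped with a decomposition V = ⨁_{m∈ℤ} V_m into finite-dimensional graded subspaces (the weight spaces of the circle action), and let U and S be odd linear endomorphisms of V such that U(V_m) ⊆ V_m and S(V_m) ⊆ V_m for all m, and for every v ∈ V_m: U²v = −i·m·v, S²v = −i·m·v, and (US + SU)v = 0. Then for every m ≠ 0, the weight space V_m decomposes as a finite direct sum of graded subspaces W_j of dimension 1|1, each invariant under both U and S, admitting a homogeneous basis f_j (even), φ_j (odd) with U f_j = μ φ_j, U φ_j = μ f_j, S f_j = ε_j iμ φ_j, S φ_j = −ε_j iμ f_j, where μ ∈ ℂ satisfies μ² = −i·m and ε_j ∈ {+1, −1}. Hence V is isomorphic to V₀ ⊕ ⨁ W_m⁺ ⊕ ⨁ W_k⁻, where W_m^± are the super weight spaces of SU(1|1). -/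

import Mathlib

open Submodule Set

lemma aux_iSupIndep_span_pair {K M ι : Type*} [Field K] [AddCommGroup M] [Module K M]
    (u : ι ⊕ ι → M) (hu : LinearIndependent K u) :
    iSupIndep (fun i : ι => Submodule.span K {u (.inl i), u (.inr i)}) := by
  rw [iSupIndep_def]
  intro i
  have hpair : ∀ j : ι, ({u (.inl j), u (.inr j)} : Set M)
      = u '' {Sum.inl j, Sum.inr j} := by
    intro j; rw [Set.image_pair]
  simp only [hpair]
  have hsup : (⨆ j, ⨆ (_ : j ≠ i), span K (u '' {Sum.inl j, Sum.inr j}))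
      = span K (u '' ⋃ j, ⋃ (_ : j ≠ i), ({Sum.inl j, Sum.inr j} : Set (ι ⊕ ι))) := by
    rw [Set.image_iUnion]
    simp_rw [Set.image_iUnion]
    rw [span_iUnion₂]
  rw [hsup]
  apply hu.disjoint_span_image
  rw [Set.disjoint_left]
  rintro x (rfl | rfl) hx <;>
  · simp only [Set.mem_iUnion, Set.mem_insert_iff, Set.mem_singleton_iff] at hx
    obtain ⟨j, hj, (h | h)⟩ := hx <;> simp_all

lemma aux_span_range_coe_basis {K M : Type*} [Field K] [AddCommGroup M] [Module K M]
    (p : Submodule K M) {ι : Type*} (b : Module.Basis ι K p) :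
    span K (Set.range (fun i => (b i : M))) = p := by
  have h : (fun i => (b i : M)) = p.subtype ∘ b := rfl
  rw [h, Set.range_comp, ← Submodule.map_span, b.span_eq, Submodule.map_top,
    Submodule.range_subtype]

lemma aux_li_coe_basis {K M : Type*} [Field K] [AddCommGroup M] [Module K M]
    (p : Submodule K M) {ι : Type*} (b : Module.Basis ι K p) :
    LinearIndependent K (fun i => (b i : M)) :=
  b.linearIndependent.map' p.subtype p.ker_subtype

/-- **Theorem 4.3 of the paper.** Let `V` be a ℤ/2-graded complex
vector space with a decomposition `V = ⨁_{m ∈ ℤ} V_m` into finite-dimensional graded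
weight spaces, and let `U`, `S` be odd linear endomorphisms preserving each `V_m`,
with `U² v = S² v = -i·m·v` and `(US + SU) v = 0` for `v ∈ V_m`.  Then for every
`m ≠ 0`, the weight space `V_m` decomposes as a finite direct sum of graded
`1|1`-dimensional subspaces `W_j`, each invariant under `U` and `S`, with homogeneous
basis `f_j` (even), `φ_j` (odd) satisfying `U f_j = μ φ_j`, `U φ_j = μ f_j`,
`S f_j = ε_j iμ φ_j`, `S φ_j = -ε_j iμ f_j`, where `μ² = -i·m` and `ε_j ∈ {±1}`.
Hence `V ≅ V₀ ⊕ ⨁ W_m⁺ ⊕ ⨁ W_k⁻` with `W_m^±` the super weight spaces of `SU(1|1)`. -/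
theorem su11_structure_theorem
    (V : Type*) [AddCommGroup V] [Module ℂ V]
    (V0 V1 : Submodule ℂ V) (hgrading : IsCompl V0 V1)
    (Vw : ℤ → Submodule ℂ V)
    (hVwIndep : iSupIndep Vw) (hVwSup : (⨆ m : ℤ, Vw m) = ⊤)
    (hVwGraded : ∀ m : ℤ, Vw m = (Vw m ⊓ V0) ⊔ (Vw m ⊓ V1))
    (hVwFin : ∀ m : ℤ, FiniteDimensional ℂ ↥(Vw m))
    (U S : V →ₗ[ℂ] V)
    (hU0 : ∀ v ∈ V0, U v ∈ V1) (hU1 : ∀ v ∈ V1, U v ∈ V0)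
    (hS0 : ∀ v ∈ V0, S v ∈ V1) (hS1 : ∀ v ∈ V1, S v ∈ V0)
    (hUw : ∀ m : ℤ, ∀ v ∈ Vw m, U v ∈ Vw m)
    (hSw : ∀ m : ℤ, ∀ v ∈ Vw m, S v ∈ Vw m)
    (hU2 : ∀ m : ℤ, ∀ v ∈ Vw m, U (U v) = (-Complex.I * (m : ℂ)) • v)
    (hS2 : ∀ m : ℤ, ∀ v ∈ Vw m, S (S v) = (-Complex.I * (m : ℂ)) • v)
    (hUS : ∀ m : ℤ, ∀ v ∈ Vw m, U (S v) + S (U v) = 0) :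
    ∀ m : ℤ, m ≠ 0 →
      ∃ (n : ℕ) (W : Fin n → Submodule ℂ V) (μ : ℂ),
        μ ^ 2 = -Complex.I * (m : ℂ) ∧
        iSupIndep W ∧ (⨆ j : Fin n, W j) = Vw m ∧
        ∀ j : Fin n,
          W j = (W j ⊓ V0) ⊔ (W j ⊓ V1) ∧
          (∀ v ∈ W j, U v ∈ W j) ∧ (∀ v ∈ W j, S v ∈ W j) ∧
          ∃ (f φ : V) (ε : ℂ), (ε = 1 ∨ ε = -1) ∧
            f ∈ V0 ∧ φ ∈ V1 ∧ f ≠ 0 ∧ φ ≠ 0 ∧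
            U f = μ • φ ∧ U φ = μ • f ∧
            S f = (ε * (Complex.I * μ)) • φ ∧ S φ = (-(ε * (Complex.I * μ))) • f ∧
            W j = Submodule.span ℂ {f, φ} := by
  intro m hm
  -- basic scalars
  set c : ℂ := -Complex.I * (m : ℂ) with hc
  have hc0 : c ≠ 0 := by
    simp [hc, Complex.I_ne_zero, hm]
  obtain ⟨μ, hμ⟩ := IsAlgClosed.exists_pow_nat_eq c (n := 2) two_pos
  have hμ0 : μ ≠ 0 := by
    intro h; rw [h] at hμ; simp at hμ; exact hc0 hμ.symm
  set a : ℂ := Complex.I * μ ^ 2 with ha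
  have ha0 : a ≠ 0 := mul_ne_zero Complex.I_ne_zero (pow_ne_zero 2 hμ0)
  -- even and odd parts of the weight space
  set E : Submodule ℂ V := Vw m ⊓ V0 with hE
  set O : Submodule ℂ V := Vw m ⊓ V1 with hO
  set T : V →ₗ[ℂ] V := U ∘ₗ S with hT
  have hTapp : ∀ x : V, T x = U (S x) := fun x => rfl
  have hanti : ∀ v ∈ Vw m, S (U v) = -(U (S v)) := by
    intro v hv
    have h := hUS m v hv
    exact eq_neg_of_add_eq_zero_right h
  have hT2 : ∀ x ∈ Vw m, T (T x) = (-(c ^ 2)) • x := by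
    intro x hx
    have hSx : S x ∈ Vw m := hSw m x hx
    have hUSx : U (S x) ∈ Vw m := hUw m _ hSx
    rw [hTapp, hTapp]
    -- T (T x) = U (S (U (S x)))
    have h1 : S (U (S x)) = -(U (S (S x))) := hanti _ hSx
    rw [h1, map_neg, hS2 m x hx, map_smul, map_smul, hU2 m x hx, ← hc]
    rw [smul_smul, ← neg_smul]
    ring_nf
  have ha2 : a * a = -(c ^ 2) := by
    rw [ha, ← hμ]; ring_nf
    rw [Complex.I_sq]; ring
  have hEmem : ∀ x : V, x ∈ E ↔ x ∈ Vw m ∧ x ∈ V0 := fun x => Submodule.mem_inf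
  have hOmem : ∀ x : V, x ∈ O ↔ x ∈ Vw m ∧ x ∈ V1 := fun x => Submodule.mem_inf
  have hTE : ∀ x ∈ E, T x ∈ E := by
    intro x hx
    rw [hEmem] at hx ⊢
    exact ⟨hUw m _ (hSw m x hx.1), hU1 _ (hS0 x hx.2)⟩
  -- eigenspace decomposition of E under T
  set P : ℂ → Submodule ℂ V := fun e => E ⊓ LinearMap.ker (T - e • LinearMap.id) with hP
  have hmemP : ∀ (e : ℂ) (x : V), x ∈ P e ↔ x ∈ E ∧ T x = e • x := by
    intro e x
    simp [hP, LinearMap.mem_ker, LinearMap.sub_apply, LinearMap.smul_apply, sub_eq_zero]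
  have hPE : ∀ e : ℂ, P e ≤ E := fun e => inf_le_left
  have hPdisj : Disjoint (P a) (P (-a)) := by
    rw [Submodule.disjoint_def]
    intro x h1 h2
    have e1 := ((hmemP a x).1 h1).2
    have e2 := ((hmemP (-a) x).1 h2).2
    have h3 : (a - (-a)) • x = 0 := by
      rw [sub_smul, e1.symm.trans e2, sub_self]
    rcases smul_eq_zero.1 h3 with h | h
    · exact absurd h (by simpa using ha0)
    · exact h
  have hPsup : P a ⊔ P (-a) = E := by
    apply le_antisymm (sup_le (hPE a) (hPE (-a)))
    intro x hx
    have hTx : T x ∈ E := hTE x hx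
    have hy : (2 : ℂ)⁻¹ • (x + a⁻¹ • T x) ∈ P a := by
      rw [hmemP]
      constructor
      · exact Submodule.smul_mem _ _ (Submodule.add_mem _ hx (Submodule.smul_mem _ _ hTx))
      · rw [map_smul, map_add, map_smul, hT2 x ((hEmem x).1 hx).1]
        match_scalars
        · field_simp
        · field_simp
          linear_combination (-1 : ℂ) * ha2
    have hz : (2 : ℂ)⁻¹ • (x - a⁻¹ • T x) ∈ P (-a) := by
      rw [hmemP]
      constructor
      · exact Submodule.smul_mem _ _ (Submodule.sub_mem _ hx (Submodule.smul_mem _ _ hTx))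
      · rw [map_smul, map_sub, map_smul, hT2 x ((hEmem x).1 hx).1]
        match_scalars
        · field_simp
        · field_simp
          linear_combination ha2
    have hxsum : x = (2 : ℂ)⁻¹ • (x + a⁻¹ • T x) + (2 : ℂ)⁻¹ • (x - a⁻¹ • T x) := by
      module
    rw [hxsum]
    exact Submodule.add_mem _ (Submodule.mem_sup_left hy) (Submodule.mem_sup_right hz)
  -- bases of the eigenspaces
  haveI := hVwFin m
  have hEVw : E ≤ Vw m := inf_le_left
  haveI hfd1 : FiniteDimensional ℂ ↥(P a) :=
    Submodule.finiteDimensional_of_le ((hPE a).trans hEVw)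
  haveI hfd2 : FiniteDimensional ℂ ↥(P (-a)) :=
    Submodule.finiteDimensional_of_le ((hPE (-a)).trans hEVw)
  set n1 := Module.finrank ℂ ↥(P a) with hn1
  set n2 := Module.finrank ℂ ↥(P (-a)) with hn2
  let b1 : Module.Basis (Fin n1) ℂ ↥(P a) := Module.finBasis ℂ ↥(P a)
  let b2 : Module.Basis (Fin n2) ℂ ↥(P (-a)) := Module.finBasis ℂ ↥(P (-a))
  set g0 : Fin n1 ⊕ Fin n2 → V := Sum.elim (fun i => (b1 i : V)) (fun i => (b2 i : V)) with hg0
  set e0 : Fin n1 ⊕ Fin n2 → ℂ := Sum.elim (fun _ => 1) (fun _ => -1) with he0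
  have hg0P : ∀ k, g0 k ∈ E ∧ T (g0 k) = (e0 k * a) • g0 k := by
    rintro (i | i)
    · have h := (hmemP a (b1 i)).1 (b1 i).2
      refine ⟨h.1, ?_⟩
      simp only [hg0, he0, Sum.elim_inl, one_mul]
      exact h.2
    · have h := (hmemP (-a) (b2 i)).1 (b2 i).2
      refine ⟨h.1, ?_⟩
      simp only [hg0, he0, Sum.elim_inr, neg_one_mul]
      exact h.2
  have hg0ne : ∀ k, g0 k ≠ 0 := by
    rintro (i | i) <;> simp only [hg0, Sum.elim_inl, Sum.elim_inr, ne_eq,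
      Submodule.coe_eq_zero]
    · exact b1.ne_zero i
    · exact b2.ne_zero i
  have hg0li : LinearIndependent ℂ g0 := by
    refine (aux_li_coe_basis _ b1).sum_type (aux_li_coe_basis _ b2) ?_
    rw [aux_span_range_coe_basis, aux_span_range_coe_basis]
    exact hPdisj
  have hg0span : span ℂ (Set.range g0) = E := by
    rw [hg0, Set.Sum.elim_range, Submodule.span_union, aux_span_range_coe_basis,
      aux_span_range_coe_basis, hPsup]
  -- reindex along Fin (n1 + n2)
  set g : Fin (n1 + n2) → V := g0 ∘ (finSumFinEquiv (m := n1) (n := n2)).symm with hg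
  set ee : Fin (n1 + n2) → ℂ := e0 ∘ (finSumFinEquiv (m := n1) (n := n2)).symm with hee
  have hgP : ∀ j, g j ∈ E ∧ T (g j) = (ee j * a) • g j := fun j => hg0P _
  have hgne : ∀ j, g j ≠ 0 := fun j => hg0ne _
  have hgli : LinearIndependent ℂ g := hg0li.comp _ (Equiv.injective _)
  have hgspan : span ℂ (Set.range g) = E := by
    rw [hg, (finSumFinEquiv (m := n1) (n := n2)).symm.surjective.range_comp g0, hg0span]
  have hεval : ∀ j, ee j = 1 ∨ ee j = -1 := by
    intro j
    rcases h : (finSumFinEquiv (m := n1) (n := n2)).symm j with i | i <;>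
      simp [hee, he0, h]
  -- the odd partners
  set L : V →ₗ[ℂ] V := (μ⁻¹ : ℂ) • U with hL
  have hLapp : ∀ x : V, L x = μ⁻¹ • U x := fun x => rfl
  set φ : Fin (n1 + n2) → V := fun j => L (g j) with hφdef
  have key : ∀ j, g j ∈ V0 ∧ φ j ∈ V1 ∧ g j ∈ Vw m ∧ φ j ∈ Vw m ∧
      U (g j) = μ • φ j ∧ U (φ j) = μ • g j ∧
      S (g j) = (ee j * (Complex.I * μ)) • φ j ∧
      S (φ j) = (-(ee j * (Complex.I * μ))) • g j ∧ φ j ≠ 0 := by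
    intro j
    obtain ⟨hjE, hjT⟩ := hgP j
    have hj0 : g j ∈ V0 := ((hEmem _).1 hjE).2
    have hjw : g j ∈ Vw m := ((hEmem _).1 hjE).1
    have hUj : U (g j) ∈ Vw m := hUw m _ hjw
    have hUj1 : U (g j) ∈ V1 := hU0 _ hj0
    have hφeq : φ j = μ⁻¹ • U (g j) := rfl
    have hφ1 : φ j ∈ V1 := by rw [hφeq]; exact Submodule.smul_mem _ _ hUj1
    have hφw : φ j ∈ Vw m := by rw [hφeq]; exact Submodule.smul_mem _ _ hUj
    have hUf : U (g j) = μ • φ j := by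
      rw [hφeq, smul_smul, mul_inv_cancel₀ hμ0, one_smul]
    have hUφ : U (φ j) = μ • g j := by
      rw [hφeq, map_smul, hU2 m _ hjw, ← hc, smul_smul]
      congr 1
      rw [← hμ]; field_simp
    have hTj : U (S (g j)) = (ee j * a) • g j := by rw [← hTapp]; exact hjT
    have hSgw : S (g j) ∈ Vw m := hSw m _ hjw
    have hUUS : U (U (S (g j))) = c • S (g j) := by rw [hU2 m _ hSgw, hc]
    have hSf : S (g j) = (ee j * (Complex.I * μ)) • φ j := by
      have h1 : c • S (g j) = (ee j * a) • U (g j) := by rw [← hUUS, hTj, map_smul]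
      have h2 : S (g j) = (c⁻¹ * ((ee j * a) * μ)) • φ j := by
        calc S (g j) = c⁻¹ • (c • S (g j)) := by
              rw [smul_smul, inv_mul_cancel₀ hc0, one_smul]
          _ = c⁻¹ • ((ee j * a) • (μ • φ j)) := by rw [h1, hUf]
          _ = _ := by rw [smul_smul, smul_smul, mul_assoc]
      rw [h2]
      congr 1
      rw [← hμ, ha]; field_simp
    have hSφ : S (φ j) = (-(ee j * (Complex.I * μ))) • g j := by
      rw [hφeq, map_smul, hanti _ hjw, hTj, smul_neg, smul_smul, ← neg_smul]
      congr 1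
      rw [ha]; field_simp
    have hφne : φ j ≠ 0 := by
      intro h0
      have h1 := hUφ
      rw [h0, map_zero] at h1
      rcases (smul_eq_zero.1 h1.symm) with h | h
      · exact hμ0 h
      · exact hgne j h
    exact ⟨hj0, hφ1, hjw, hφw, hUf, hUφ, hSf, hSφ, hφne⟩
  -- span of the odd partners
  have hφspan : span ℂ (Set.range φ) = O := by
    have h1 : Set.range φ = L '' Set.range g := by
      rw [hφdef, ← Set.range_comp]
      rfl
    rw [h1, ← Submodule.map_span, hgspan]
    apply le_antisymm
    · rintro _ ⟨x, hx, rfl⟩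
      rw [hOmem, hLapp]
      exact ⟨Submodule.smul_mem _ _ (hUw m x ((hEmem x).1 hx).1),
        Submodule.smul_mem _ _ (hU0 x ((hEmem x).1 hx).2)⟩
    · intro y hy
      obtain ⟨hyw, hy1⟩ := (hOmem y).1 hy
      refine ⟨μ⁻¹ • U y, ?_, ?_⟩
      · exact (hEmem _).2 ⟨Submodule.smul_mem _ _ (hUw m y hyw),
          Submodule.smul_mem _ _ (hU1 y hy1)⟩
      · rw [hLapp, map_smul, hU2 m y hyw, ← hc, smul_smul, smul_smul]
        rw [show μ⁻¹ * μ⁻¹ * c = 1 by rw [← hμ]; field_simp, one_smul]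
  have hdisjEO : Disjoint E O := hgrading.disjoint.mono inf_le_right inf_le_right
  -- joint linear independence
  have hφli : LinearIndependent ℂ φ := by
    have h1 : φ = L ∘ g := rfl
    rw [h1]
    apply hgli.map
    rw [hgspan, Submodule.disjoint_def]
    intro x hxE hxK
    have h2 : U x = 0 := by
      have h3 := hxK
      rw [LinearMap.mem_ker, hLapp] at h3
      rcases smul_eq_zero.1 h3 with h | h
      · exact absurd h (inv_ne_zero hμ0)
      · exact h
    have h4 : c • x = 0 := by rw [hc, ← hU2 m x ((hEmem x).1 hxE).1, h2, map_zero]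
    rcases smul_eq_zero.1 h4 with h | h
    · exact absurd h hc0
    · exact h
  have huli : LinearIndependent ℂ (Sum.elim g φ) := by
    refine hgli.sum_type hφli ?_
    rw [hgspan, hφspan]
    exact hdisjEO
  refine ⟨n1 + n2, fun j => span ℂ {g j, φ j}, μ, hμ, ?_, ?_, ?_⟩
  · exact aux_iSupIndep_span_pair (Sum.elim g φ) huli
  · have h1 : ∀ j, span ℂ ({g j, φ j} : Set V) = span ℂ {g j} ⊔ span ℂ {φ j} := by
      intro j
      rw [Submodule.span_insert]
    simp_rw [h1]
    rw [iSup_sup_eq, ← Submodule.span_range_eq_iSup, ← Submodule.span_range_eq_iSup,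
      hgspan, hφspan]
    exact (hVwGraded m).symm
  · intro j
    obtain ⟨hj0, hφ1, hjw, hφw, hUf, hUφ, hSf, hSφ, hφne⟩ := key j
    have hgW : g j ∈ span ℂ ({g j, φ j} : Set V) :=
      Submodule.subset_span (Set.mem_insert _ _)
    have hφW : φ j ∈ span ℂ ({g j, φ j} : Set V) :=
      Submodule.subset_span (Set.mem_insert_of_mem _ rfl)
    refine ⟨?_, ?_, ?_, g j, φ j, ee j, hεval j, hj0, hφ1, hgne j, hφne, hUf, hUφ, hSf, hSφ, rfl⟩
    · apply le_antisymm
      · rw [Submodule.span_le]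
        rintro x (rfl | rfl)
        · exact Submodule.mem_sup_left ⟨hgW, hj0⟩
        · exact Submodule.mem_sup_right ⟨hφW, hφ1⟩
      · exact sup_le inf_le_left inf_le_left
    · intro v hv
      induction hv using Submodule.span_induction with
      | mem x hx =>
        rcases hx with rfl | rfl
        · rw [hUf]; exact Submodule.smul_mem _ _ hφW
        · rw [hUφ]; exact Submodule.smul_mem _ _ hgW
      | zero => rw [map_zero]; exact Submodule.zero_mem _
      | add x y _ _ hx hy => rw [map_add]; exact Submodule.add_mem _ hx hy
      | smul t x _ hx => rw [map_smul]; exact Submodule.smul_mem _ _ hx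
    · intro v hv
      induction hv using Submodule.span_induction with
      | mem x hx =>
        rcases hx with rfl | rfl
        · rw [hSf]; exact Submodule.smul_mem _ _ hφW
        · rw [hSφ]; exact Submodule.smul_mem _ _ hgW
      | zero => rw [map_zero]; exact Submodule.zero_mem _
      | add x y _ _ hx hy => rw [map_add]; exact Submodule.add_mem _ hx hy
      | smul t x _ hx => rw [map_smul]; exact Submodule.smul_mem _ _ hx
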